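/- Let α, β > −1 and m, n ∈ ℕ₀. Then T_{2m+1}^{(α,β)} · T_{2n+1}^{(α,β)} = Σ_{k=|m−n|}^{m+n} g_R⁺(m,n;k) · [ ((2k+a+b+1)/(4k+2a+2)) · T_{2k+2}^{(α,β)} + ((2k+a−b+1)/(4k+2a+2)) · T_{2k}^{(α,β)} ], where g_R⁺(m,n;k) are the linearization coefficients of the Jacobi polynomials (R_n^{(α,β+1)}). -/

import Mathlib

open Polynomial Finset

noncomputable def poch (c : ℝ) (k : ℕ) : ℝ := (ascPochhammer ℝ k).eval c

/-- Jacobi polynomial `R_n^{(α,β)}`, normalized by `R_n^{(α,β)}(1) = 1`. -/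
noncomputable def jacobiR (α β : ℝ) (n : ℕ) : Polynomial ℝ :=
  ∑ k ∈ Finset.range (n + 1),
    Polynomial.C (poch (-(n : ℝ)) k * poch ((n : ℝ) + α + β + 1) k /
      (poch (α + 1) k * 2 ^ k * (Nat.factorial k : ℝ))) * (1 - Polynomial.X) ^ k

/-- Generalized Chebyshev polynomial `T_n^{(α,β)}`. -/
noncomputable def genCheb (α β : ℝ) (n : ℕ) : Polynomial ℝ :=
  if n % 2 = 0 then (jacobiR α β (n / 2)).comp (2 * Polynomial.X ^ 2 - 1)
  else Polynomial.X * (jacobiR α (β + 1) (n / 2)).comp (2 * Polynomial.X ^ 2 - 1)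

/-- Gasper's set `V` (with `a = α+β+1`, `b = α−β`). -/
def Vset : Set (ℝ × ℝ) := { p | -1 < p.1 ∧ -1 < p.2 ∧
  ((p.1 + p.2 + 1) ^ 2 - 7 * (p.1 + p.2 + 1) - 24) * (p.1 - p.2) ^ 2 ≤
    (p.1 + p.2 + 1) * ((p.1 + p.2 + 1) + 5) * ((p.1 + p.2 + 1) + 3) ^ 2 ∧
  0 ≤ p.1 - p.2 }

/-- The set `V′`. -/
def V'set : Set (ℝ × ℝ) := { p | -1 < p.1 ∧ -1 < p.2 ∧
  0 ≤ (p.1 + p.2 + 1) ^ 2 + 2 * (p.1 - p.2) ^ 2 + 3 * (p.1 + p.2 + 1) ∧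
  0 ≤ p.1 - p.2 }

/-- The set `Δ`. -/
def Dset : Set (ℝ × ℝ) := { p | -1 < p.1 ∧ -1 < p.2 ∧
  0 ≤ p.1 + p.2 + 1 ∧ 0 ≤ p.1 - p.2 }

/-- The coefficient function `ι(m, m+s; ·)` (with parameters `a`, `b`). -/
noncomputable def iotaF (a b : ℝ) (m s : ℕ) (j : ℝ) : ℝ :=
  b * ((2 * (m : ℝ) - j) * (2 * (m : ℝ) + 2 * (s : ℝ) + j + 2 * a) *
        ((2 * (s : ℝ) + j + 1) * (j + 1)) / (2 * (s : ℝ) + 2 * j + a + 1)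
      - (2 * (m : ℝ) - j + 1) * (2 * (m : ℝ) + 2 * (s : ℝ) + j + 2 * a - 1) *
        ((2 * (s : ℝ) + j) * j) / (2 * (s : ℝ) + 2 * j + a - 1))

/-- The coefficient function `θ(m, m+s; ·)` (with parameters `a`, `b`). -/
noncomputable def thetaF (a b : ℝ) (m s : ℕ) (j : ℝ) : ℝ :=
  (2 * (m : ℝ) - j + a - 1) * (2 * (m : ℝ) + 2 * (s : ℝ) + j + a + 1) *
    ((2 * (s : ℝ) + j + 1) * (2 * (s : ℝ) + 2 * j + a - b + 1)) /
    ((2 * (s : ℝ) + 2 * j + a + 1) * (2 * (s : ℝ) + 2 * j + a + 2)) * (j + 1)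

/-- The coefficient function `κ(m, m+s; ·)` (with parameters `a`, `b`). -/
noncomputable def kappaF (a b : ℝ) (m s : ℕ) (j : ℝ) : ℝ :=
  (2 * (m : ℝ) - j + 1) * (2 * (m : ℝ) + 2 * (s : ℝ) + j + 2 * a - 1) *
    ((2 * (s : ℝ) + j + a - 1) * (2 * (s : ℝ) + 2 * j + a + b - 1)) /
    ((2 * (s : ℝ) + 2 * j + a - 2) * (2 * (s : ℝ) + 2 * j + a - 1)) * (j + a - 1)

/-- Recurrence coefficient `a^T_{2k+1} = (2k+a+b+1)/(4k+2a+2)`. -/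
noncomputable def aTc (a b : ℝ) (k : ℕ) : ℝ :=
  (2 * (k : ℝ) + a + b + 1) / (4 * (k : ℝ) + 2 * a + 2)

/-- Recurrence coefficient `c^T_{2k+1} = (2k+a−b+1)/(4k+2a+2)`. -/
noncomputable def cTc (a b : ℝ) (k : ℕ) : ℝ :=
  (2 * (k : ℝ) + a - b + 1) / (4 * (k : ℝ) + 2 * a + 2)

/-- The auxiliary function `p`. -/
noncomputable def pF (a b : ℝ) (m s j : ℕ) : ℝ :=
  cTc a b (s + j + 1) / aTc a b (s + j) *
    (iotaF (a + 1) (b - 1) m s (j : ℝ) / thetaF (a + 1) (b - 1) m s (j : ℝ))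

/-- The auxiliary function `q`. -/
noncomputable def qF (a b : ℝ) (m s j : ℕ) : ℝ :=
  (cTc a b (s + j) * cTc a b (s + j + 1)) / (aTc a b (s + j - 1) * aTc a b (s + j)) *
    (kappaF (a + 1) (b - 1) m s (j : ℝ) / thetaF (a + 1) (b - 1) m s (j : ℝ))

lemma poch_zero (c : ℝ) : poch c 0 = 1 := by simp [poch]

lemma poch_succ_right (c : ℝ) (k : ℕ) : poch c (k+1) = poch c k * (c + k) := by
  simp [poch, ascPochhammer_succ_eval]

lemma poch_succ_left (c : ℝ) (k : ℕ) : poch c (k+1) = c * poch (c+1) k := by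
  simp [poch, ascPochhammer_succ_left, eval_mul, eval_comp]

lemma poch_pos {c : ℝ} (hc : 0 < c) (k : ℕ) : 0 < poch c k := by
  induction k with
  | zero => simp [poch_zero]
  | succ j ih => rw [poch_succ_right]; positivity

lemma poch_neg_nat (n : ℕ) : poch (-(n:ℝ)) (n+1) = 0 := by
  induction n with
  | zero => simp [poch_succ_left, poch_zero]
  | succ j ih =>
    rw [poch_succ_left]
    push_cast
    simp [show -((j:ℝ)+1) + 1 = -(j:ℝ) by ring, ih]

noncomputable def jcoef (α β : ℝ) (n k : ℕ) : ℝ :=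
  poch (-(n:ℝ)) k * poch ((n:ℝ) + α + β + 1) k /
    (poch (α + 1) k * 2 ^ k * (Nat.factorial k : ℝ))

lemma coeff_id (α β : ℝ) (hα : -1 < α) (hβ : -1 < β) (n k : ℕ) :
    ((n:ℝ)+α+1)/(2*n+α+β+2) * jcoef α β (n+1) k
      + ((n:ℝ)+β+1)/(2*n+α+β+2) * jcoef α β n k =
    jcoef α (β+1) n k - (if k = 0 then 0 else jcoef α (β+1) n (k-1) / 2) := by
  have hT : (2*(n:ℝ)+α+β+2) ≠ 0 := by
    have : (0:ℝ) ≤ n := Nat.cast_nonneg n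
    nlinarith
  cases k with
  | zero =>
    simp only [jcoef, poch_zero, if_pos rfl]
    norm_num
    have hT2 : (n:ℝ)*2+α+β+2 ≠ 0 := by rw [mul_comm]; exact hT
    field_simp
    ring
  | succ j =>
    have hDpos := poch_pos (show (0:ℝ) < α+1 by linarith) j
    have hD : poch (α+1) j ≠ 0 := ne_of_gt hDpos
    have hαj : (α+1+(j:ℝ)) ≠ 0 := by have : (0:ℝ) ≤ j := Nat.cast_nonneg j; nlinarith
    have hfac : ((Nat.factorial j : ℕ):ℝ) ≠ 0 := by
      exact_mod_cast Nat.cast_ne_zero.mpr (Nat.factorial_ne_zero j)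
    have hj1 : ((j:ℝ)+1) ≠ 0 := by positivity
    have h2j : (2:ℝ)^j ≠ 0 := by positivity
    have e1 : poch (-((n:ℝ)+1)) (j+1) = -((n:ℝ)+1) * poch (-(n:ℝ)) j := by
      rw [poch_succ_left, show -((n:ℝ)+1)+1 = -(n:ℝ) by ring]
    have e2 : poch (-(n:ℝ)) (j+1) = poch (-(n:ℝ)) j * ((j:ℝ) - n) := by
      rw [poch_succ_right]; ring
    have e3 : poch ((n:ℝ)+1+α+β+1) (j+1) = poch ((n:ℝ)+α+β+2) j * ((n:ℝ)+α+β+2+j) := by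
      rw [show (n:ℝ)+1+α+β+1 = (n:ℝ)+α+β+2 by ring, poch_succ_right]
    have e4 : poch ((n:ℝ)+α+β+1) (j+1) = ((n:ℝ)+α+β+1) * poch ((n:ℝ)+α+β+2) j := by
      rw [poch_succ_left, show (n:ℝ)+α+β+1+1 = (n:ℝ)+α+β+2 by ring]
    have e5 : poch ((n:ℝ)+α+(β+1)+1) (j+1) = poch ((n:ℝ)+α+β+2) j * ((n:ℝ)+α+β+2+j) := by
      rw [show (n:ℝ)+α+(β+1)+1 = (n:ℝ)+α+β+2 by ring, poch_succ_right]
    have e6 : poch (α+1) (j+1) = poch (α+1) j * (α+1+(j:ℝ)) := by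
      rw [poch_succ_right]
    have e5' : poch ((n:ℝ)+α+(β+1)+1) j = poch ((n:ℝ)+α+β+2) j := by
      rw [show (n:ℝ)+α+(β+1)+1 = (n:ℝ)+α+β+2 by ring]
    simp only [jcoef, Nat.succ_ne_zero, if_neg, Nat.succ_sub_one, Nat.factorial_succ,
      Nat.cast_mul, Nat.cast_add, Nat.cast_one, pow_succ]
    push_cast
    rw [e1, e2, e3, e4, e5, e5', e6]
    have hT2 : (n:ℝ)*2+α+β+2 ≠ 0 := by rw [mul_comm]; exact hT
    field_simp
    ring

lemma jacobiR_eq (α β : ℝ) (n : ℕ) :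
    jacobiR α β n = ∑ k ∈ Finset.range (n+1), C (jcoef α β n k) * (1 - X)^k := rfl

lemma key (α β : ℝ) (hα : -1 < α) (hβ : -1 < β) (n : ℕ) :
    C (((n:ℝ)+α+1)/(2*(n:ℝ)+α+β+2)) * jacobiR α β (n+1)
      + C (((n:ℝ)+β+1)/(2*(n:ℝ)+α+β+2)) * jacobiR α β n
    = C ((1:ℝ)/2) * (1 + X) * jacobiR α (β+1) n := by
  have htopz : jcoef α β n (n+1) = 0 := by simp [jcoef, poch_neg_nat]
  have htopz' : jcoef α (β+1) n (n+1) = 0 := by simp [jcoef, poch_neg_nat]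
  have h2 : (C ((1:ℝ)/2) : Polynomial ℝ) * 2 = 1 := by
    rw [show (2:Polynomial ℝ) = C 2 from (map_ofNat C 2).symm, ← C_mul]; norm_num
  have eqL : C (((n:ℝ)+α+1)/(2*(n:ℝ)+α+β+2)) * jacobiR α β (n+1)
      + C (((n:ℝ)+β+1)/(2*(n:ℝ)+α+β+2)) * jacobiR α β n
      = ∑ k ∈ Finset.range (n+2),
          C (((n:ℝ)+α+1)/(2*(n:ℝ)+α+β+2) * jcoef α β (n+1) k
             + ((n:ℝ)+β+1)/(2*(n:ℝ)+α+β+2) * jcoef α β n k) * (1-X)^k := by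
    rw [jacobiR_eq α β (n+1), jacobiR_eq α β n, Finset.mul_sum, Finset.mul_sum]
    have hext : ∑ k ∈ Finset.range (n+2),
        C (((n:ℝ)+β+1)/(2*(n:ℝ)+α+β+2)) * (C (jcoef α β n k) * (1-X)^k)
        = ∑ k ∈ Finset.range (n+1),
        C (((n:ℝ)+β+1)/(2*(n:ℝ)+α+β+2)) * (C (jcoef α β n k) * (1-X)^k) := by
      rw [Finset.sum_range_succ]; simp [htopz]
    rw [← hext, ← Finset.sum_add_distrib]
    refine Finset.sum_congr rfl fun k _ => ?_
    rw [C_add, C_mul, C_mul]; ring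
  have eqR : C ((1:ℝ)/2) * (1 + X) * jacobiR α (β+1) n
      = ∑ k ∈ Finset.range (n+2),
          C (jcoef α (β+1) n k - (if k = 0 then 0 else jcoef α (β+1) n (k-1)/2)) * (1-X)^k := by
    have hsplit : ∑ k ∈ Finset.range (n+2),
        C (jcoef α (β+1) n k - (if k = 0 then 0 else jcoef α (β+1) n (k-1)/2)) * (1-X)^k
        = (∑ k ∈ Finset.range (n+2), C (jcoef α (β+1) n k) * (1-X)^k)
          - ∑ k ∈ Finset.range (n+2),
              C (if k = 0 then (0:ℝ) else jcoef α (β+1) n (k-1)/2) * (1-X)^k := by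
      rw [← Finset.sum_sub_distrib]
      refine Finset.sum_congr rfl fun k _ => ?_
      rw [C_sub]; ring
    have hshift : ∑ k ∈ Finset.range (n+2),
        C (if k = 0 then (0:ℝ) else jcoef α (β+1) n (k-1)/2) * (1-X)^k
        = ∑ k ∈ Finset.range (n+1), C (jcoef α (β+1) n k / 2) * (1-X)^(k+1) := by
      rw [Finset.sum_range_succ']
      simp
    have htop : ∑ k ∈ Finset.range (n+2), C (jcoef α (β+1) n k) * (1-X)^k
        = ∑ k ∈ Finset.range (n+1), C (jcoef α (β+1) n k) * (1-X)^k := by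
      rw [Finset.sum_range_succ]; simp [htopz']
    rw [hsplit, hshift, htop, jacobiR_eq, Finset.mul_sum, ← Finset.sum_sub_distrib]
    refine Finset.sum_congr rfl fun k _ => ?_
    have hC : C (jcoef α (β+1) n k / 2) = C (jcoef α (β+1) n k) * C ((1:ℝ)/2) := by
      rw [← C_mul]; ring_nf
    rw [hC]
    linear_combination (C (jcoef α (β+1) n k) * (1-X)^k) * h2
  rw [eqL, eqR]
  exact Finset.sum_congr rfl fun k _ => by rw [coeff_id α β hα hβ n k]

lemma genCheb_odd (α β : ℝ) (m : ℕ) :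
    genCheb α β (2*m+1) = X * (jacobiR α (β+1) m).comp (2 * X^2 - 1) := by
  have h1 : (2*m+1) % 2 = 1 := by omega
  have h2 : (2*m+1) / 2 = m := by omega
  simp [genCheb, h1, h2]

lemma genCheb_even (α β : ℝ) (m : ℕ) :
    genCheb α β (2*m) = (jacobiR α β m).comp (2 * X^2 - 1) := by
  have h1 : (2*m) % 2 = 0 := by omega
  have h2 : (2*m) / 2 = m := by omega
  simp [genCheb, h1, h2]

/-- Linearization of products of odd-degree generalized Chebyshev polynomials in terms of
the Jacobi linearization coefficients `g_R⁺` of `(R_n^{(α,β+1)})`. -/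
theorem stmt12 (α β : ℝ) (hα : -1 < α) (hβ : -1 < β)
    (g : ℕ → ℕ → ℕ → ℝ)
    (hg : ∀ m n : ℕ, jacobiR α (β + 1) m * jacobiR α (β + 1) n =
      ∑ k ∈ Finset.Icc (Nat.dist m n) (m + n), Polynomial.C (g m n k) * jacobiR α (β + 1) k)
    (m n : ℕ) :
    genCheb α β (2 * m + 1) * genCheb α β (2 * n + 1) =
      ∑ k ∈ Finset.Icc (Nat.dist m n) (m + n),
        Polynomial.C (g m n k) *
          (Polynomial.C ((2 * (k : ℝ) + (α + β + 1) + (α - β) + 1) /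
              (4 * (k : ℝ) + 2 * (α + β + 1) + 2)) * genCheb α β (2 * k + 2) +
           Polynomial.C ((2 * (k : ℝ) + (α + β + 1) - (α - β) + 1) /
              (4 * (k : ℝ) + 2 * (α + β + 1) + 2)) * genCheb α β (2 * k)) := by
  have h2 : (C ((1:ℝ)/2) : Polynomial ℝ) * 2 = 1 := by
    rw [show (2:Polynomial ℝ) = C 2 from (map_ofNat C 2).symm, ← C_mul]; norm_num
  rw [genCheb_odd, genCheb_odd,
    show (X * (jacobiR α (β+1) m).comp (2 * X^2 - 1)) * (X * (jacobiR α (β+1) n).comp (2 * X^2 - 1))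
      = X^2 * ((jacobiR α (β+1) m * jacobiR α (β+1) n).comp (2 * X^2 - 1)) by
        rw [mul_comp]; ring,
    hg m n, Polynomial.sum_comp, Finset.mul_sum]
  refine Finset.sum_congr rfl fun k _ => ?_
  have hT : (2*(k:ℝ)+α+β+2) ≠ 0 := by
    have : (0:ℝ) ≤ k := Nat.cast_nonneg k
    nlinarith
  have h4T : (4*(k:ℝ)+2*(α+β+1)+2) ≠ 0 := by
    have : (0:ℝ) ≤ k := Nat.cast_nonneg k
    nlinarith
  have hcoA : (2 * (k : ℝ) + (α + β + 1) + (α - β) + 1) / (4 * (k : ℝ) + 2 * (α + β + 1) + 2)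
      = ((k:ℝ)+α+1)/(2*(k:ℝ)+α+β+2) := by
    rw [div_eq_div_iff h4T hT]; ring
  have hcoB : (2 * (k : ℝ) + (α + β + 1) - (α - β) + 1) / (4 * (k : ℝ) + 2 * (α + β + 1) + 2)
      = ((k:ℝ)+β+1)/(2*(k:ℝ)+α+β+2) := by
    rw [div_eq_div_iff h4T hT]; ring
  rw [hcoA, hcoB, show 2*k+2 = 2*(k+1) by ring, genCheb_even, genCheb_even]
  have hkey := congrArg (fun p : Polynomial ℝ => p.comp (2 * X^2 - 1)) (key α β hα hβ k)
  simp only [add_comp, mul_comp, C_comp, one_comp, X_comp] at hkey ⊢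
  linear_combination (-(C (g m n k))) * hkey
    - (X^2 * C (g m n k) * (jacobiR α (β+1) k).comp (2 * X^2 - 1)) * h2
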